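/- For every injection sequence s, the corresponding belt function of s is a belt assignment; that is, it satisfies conditions (i), (ii) and (iii). -/

import Mathlib

open Finset

variable {α : Type*}

/-- A mould of type `A` is injected in step `i`: `b i = A` and either `i < N`
or the slot `N` steps earlier did not carry `A`. -/
def Injected (N : ℕ) (b : ℕ → Option α) (A : α) (i : ℕ) : Prop :=
  b i = some A ∧ (i < N ∨ b (i - N) ≠ some A)

/-- The number of moulds of type `A` used by the belt function `b`. -/
noncomputable def MouldsUsed (N : ℕ) (b : ℕ → Option α) (A : α) : ℕ :=
  {i | Injected N b A i}.ncard

/-- A belt assignment: (i) each type `A` occurs exactly `d A` times, (ii) an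
injected mould stays on the belt (period `N`) until the demand of its type is
met, (iii) at most `c A` moulds of type `A` are used. -/
def IsBeltAssignment (N : ℕ) (d c : α → ℕ) (b : ℕ → Option α) : Prop :=
  (∀ A : α, {i | b i = some A}.Finite) ∧
  (∀ A : α, {i | b i = some A}.ncard = d A) ∧
  (∀ (i : ℕ) (A : α), b i = some A →
      b (i + N) = some A ∨ {j | b j = some A ∧ j < i + N}.ncard = d A) ∧
  (∀ A : α, MouldsUsed N b A ≤ c A)

/-- The makespan of `b`: the smallest `s` such that for every type `A` all of
its demand appears among steps `0, …, s - N - 1`. -/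
noncomputable def Makespan (N : ℕ) (d : α → ℕ) (b : ℕ → Option α) : ℕ :=
  sInf {s | ∀ A : α, {j | b j = some A ∧ j < s - N}.ncard = d A}

/-- Property (E): every injection happens before every empty slot. -/
def PropE (N : ℕ) (b : ℕ → Option α) : Prop :=
  ∀ (A : α) (i e : ℕ), Injected N b A i → b e = none → i < e

/-- Property (F): if there is an empty slot `e` and strictly fewer than `c A`
moulds of type `A` are used, then `A` does not occur at any step `i ≥ e`. -/
def PropF (N : ℕ) (c : α → ℕ) (b : ℕ → Option α) : Prop :=
  ∀ (e : ℕ) (A : α), b e = none → MouldsUsed N b A < c A → ∀ i, e ≤ i → b i ≠ some A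

section CorrespondingBelt

variable [Fintype α] [DecidableEq α]

/-- One step of the greedy construction of the belt function corresponding to
an injection sequence. `pre` is the list of slots assigned so far (slot `i`
for `i < pre.length`), `rem` is the not-yet-used tail of the injection
sequence (the pointer position). If the total demand is met, the slot stays
empty. Otherwise, if the slot `N` steps earlier carries a type whose demand
is not yet met, that type stays in the slot. Otherwise the pointer is
advanced past all moulds whose type's demand is already met and, if a mould
remains, it is injected; else the slot stays empty. -/
def beltStep (N : ℕ) (d : α → ℕ) (pre : List (Option α)) (rem : List α) :
    Option α × List α :=
  if pre.reduceOption.length = ∑ A : α, d A then (none, rem)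
  else if N ≤ pre.length ∧
      ∃ A : α, pre.getD (pre.length - N) none = some A ∧ pre.count (some A) < d A then
    (pre.getD (pre.length - N) none, rem)
  else
    match rem.dropWhile (fun A => decide (d A ≤ pre.count (some A))) with
    | [] => (none, [])
    | A :: t => (some A, t)

/-- The state (assigned slots, remaining injection sequence) after `i` steps
of the greedy construction. -/
def beltState (N : ℕ) (d : α → ℕ) (s : List α) : ℕ → List (Option α) × List α
  | 0 => ([], s)
  | i + 1 =>
      let p := beltState N d s i
      let q := beltStep N d p.1 p.2
      (p.1 ++ [q.1], q.2)

/-- The belt function corresponding to the injection sequence `s`. -/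
def corrBelt (N : ℕ) (d : α → ℕ) (s : List α) (i : ℕ) : Option α :=
  (beltState N d s (i + 1)).1.getD i none

end CorrespondingBelt

namespace Statement8Aux
set_option linter.unusedSectionVars false

variable [Fintype α] [DecidableEq α]

/-- assigned slots after `i` steps -/
def P (N : ℕ) (d : α → ℕ) (s : List α) (i : ℕ) : List (Option α) := (beltState N d s i).1
/-- remaining sequence after `i` steps -/
def R (N : ℕ) (d : α → ℕ) (s : List α) (i : ℕ) : List α := (beltState N d s i).2

variable (N : ℕ) (d : α → ℕ) (s : List α)

lemma P_succ (i : ℕ) :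
    P N d s (i+1) = P N d s i ++ [(beltStep N d (P N d s i) (R N d s i)).1] := rfl

lemma R_succ (i : ℕ) :
    R N d s (i+1) = (beltStep N d (P N d s i) (R N d s i)).2 := rfl

lemma len_P (i : ℕ) : (P N d s i).length = i := by
  induction i with
  | zero => rfl
  | succ i ih => rw [P_succ]; simp [ih]

lemma getD_concat (l : List (Option α)) (x : Option α) : (l ++ [x]).getD l.length none = x := by
  rw [List.getD_eq_getElem?_getD, List.getElem?_concat_length]; rfl

lemma b_eq (i : ℕ) : corrBelt N d s i = (beltStep N d (P N d s i) (R N d s i)).1 := by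
  have h := getD_concat (P N d s i) (beltStep N d (P N d s i) (R N d s i)).1
  rw [len_P] at h
  show (P N d s (i+1)).getD i none = _
  rw [P_succ]; exact h

lemma P_eq (i : ℕ) : P N d s i = (List.range i).map (corrBelt N d s) := by
  induction i with
  | zero => rfl
  | succ i ih =>
      rw [P_succ, ← b_eq, ih, List.range_succ, List.map_append]
      simp

lemma getD_P {j i : ℕ} (h : j < i) : (P N d s i).getD j none = corrBelt N d s j := by
  rw [P_eq, List.getD_eq_getElem?_getD, List.getElem?_map, List.getElem?_range h]
  rfl

end Statement8Aux

namespace Statement8Aux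
set_option linter.unusedSectionVars false
set_option linter.unusedSectionVars false
variable [Fintype α] [DecidableEq α] (N : ℕ) (d : α → ℕ) (s : List α)

/-- count of type A among first i slots -/
def cnt (i : ℕ) (A : α) : ℕ := (P N d s i).count (some A)
/-- total number of assigned slots among first i -/
def tot (i : ℕ) : ℕ := (P N d s i).reduceOption.length

lemma ncard_eq_cnt (n : ℕ) (A : α) :
    {j | corrBelt N d s j = some A ∧ j < n}.ncard = cnt N d s n A := by
  classical
  have h1 : {j | corrBelt N d s j = some A ∧ j < n}
      = ↑((Finset.range n).filter (fun j => corrBelt N d s j = some A)) := by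
    ext j; simp [and_comm]
  rw [h1, Set.ncard_coe_finset, ← Nat.count_eq_card_filter_range]
  show _ = (P N d s n).count (some A)
  rw [P_eq, List.count, List.countP_map, Nat.count]
  apply List.countP_congr
  intro j _
  simp [Function.comp]

lemma sum_count (l : List (Option α)) : l.reduceOption.length = ∑ A : α, l.count (some A) := by
  induction l with
  | nil => simp
  | cons x t ih =>
      cases x with
      | none => simpa [List.count_cons] using ih
      | some B =>
          rw [List.reduceOption_cons_of_some]
          simp only [List.length_cons, List.count_cons, ih]
          rw [Finset.sum_add_distrib]
          simp [Finset.sum_ite_eq]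

lemma cnt_succ (i : ℕ) (A : α) :
    cnt N d s (i+1) A = cnt N d s i A + if corrBelt N d s i = some A then 1 else 0 := by
  show (P N d s (i+1)).count _ = _
  rw [P_succ, ← b_eq, List.count_append]
  simp [List.count_cons, cnt]

lemma tot_succ (i : ℕ) :
    tot N d s (i+1) = tot N d s i + if corrBelt N d s i = none then 0 else 1 := by
  show (P N d s (i+1)).reduceOption.length = _
  rw [P_succ, ← b_eq, List.reduceOption_append]
  cases h : corrBelt N d s i <;> simp [h, tot, List.reduceOption]

lemma cnt_mono {i j : ℕ} (h : i ≤ j) (A : α) : cnt N d s i A ≤ cnt N d s j A := by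
  induction j, h using Nat.le_induction with
  | base => exact le_refl _
  | succ j hij ih => rw [cnt_succ]; omega

lemma tot_mono {i j : ℕ} (h : i ≤ j) : tot N d s i ≤ tot N d s j := by
  induction j, h using Nat.le_induction with
  | base => exact le_refl _
  | succ j hij ih => rw [tot_succ]; omega

lemma tot_eq_sum (i : ℕ) : tot N d s i = ∑ A : α, cnt N d s i A := sum_count _

end Statement8Aux

namespace Statement8Aux
set_option linter.unusedSectionVars false
variable [Fintype α] [DecidableEq α] (N : ℕ) (d : α → ℕ) (s : List α)

lemma dropWhile_head_false {β : Type*} {p : β → Bool} {l t : List β} {a : β}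
    (h : l.dropWhile p = a :: t) : p a = false := by
  induction l with
  | nil => simp [List.dropWhile] at h
  | cons b l ih =>
      rw [List.dropWhile_cons] at h
      split at h
      · exact ih h
      · next hb => cases h; simpa using hb

lemma count_dropWhile {β : Type*} [DecidableEq β] {p : β → Bool} {x : β} (hx : p x = false)
    (l : List β) : (l.dropWhile p).count x = l.count x := by
  conv_rhs => rw [← (List.takeWhile_append_dropWhile : l.takeWhile p ++ l.dropWhile p = l)]
  rw [List.count_append]
  have h0 : (l.takeWhile p).count x = 0 := by
    rw [List.count_eq_zero]
    intro hm
    have := List.mem_takeWhile_imp hm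
    simp [hx] at this
  omega

/-- total demand -/
def T : ℕ := ∑ A : α, d A

lemma step_total {i : ℕ} (h : tot N d s i = T d) :
    corrBelt N d s i = none ∧ R N d s (i+1) = R N d s i := by
  have h' : (P N d s i).reduceOption.length = ∑ A : α, d A := h
  rw [b_eq, R_succ]
  unfold beltStep
  rw [if_pos h']
  exact ⟨rfl, rfl⟩

lemma step_keep {i : ℕ} {A : α} (hN : 0 < N) (h : tot N d s i ≠ T d) (hNi : N ≤ i)
    (hA : corrBelt N d s (i - N) = some A) (hlt : cnt N d s i A < d A) :
    corrBelt N d s i = some A ∧ R N d s (i+1) = R N d s i := by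
  have h' : ¬ ((P N d s i).reduceOption.length = ∑ A : α, d A) := h
  have hsub : i - N < i := Nat.sub_lt (lt_of_lt_of_le hN hNi) hN
  have hgd : (P N d s i).getD ((P N d s i).length - N) none = some A := by
    rw [len_P, getD_P N d s hsub]; exact hA
  rw [b_eq, R_succ]
  unfold beltStep
  rw [if_neg h', if_pos ⟨by rw [len_P]; exact hNi, A, hgd, hlt⟩, hgd]
  exact ⟨rfl, rfl⟩

lemma step_cases (hN : 0 < N) (i : ℕ) :
    (tot N d s i = T d ∧ corrBelt N d s i = none ∧ R N d s (i+1) = R N d s i)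
    ∨ (tot N d s i ≠ T d ∧ ∃ A, N ≤ i ∧ corrBelt N d s (i - N) = some A ∧
        cnt N d s i A < d A ∧ corrBelt N d s i = some A ∧ R N d s (i+1) = R N d s i)
    ∨ (tot N d s i ≠ T d ∧
        (R N d s i).dropWhile (fun B => decide (d B ≤ cnt N d s i B)) = [] ∧
        corrBelt N d s i = none ∧ R N d s (i+1) = [])
    ∨ (tot N d s i ≠ T d ∧ ∃ A tl,
        (R N d s i).dropWhile (fun B => decide (d B ≤ cnt N d s i B)) = A :: tl ∧
        cnt N d s i A < d A ∧ corrBelt N d s i = some A ∧ R N d s (i+1) = tl) := by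
  by_cases h1 : tot N d s i = T d
  · exact Or.inl ⟨h1, step_total N d s h1⟩
  have h1' : ¬ ((P N d s i).reduceOption.length = ∑ A : α, d A) := h1
  rw [b_eq, R_succ]
  unfold beltStep
  rw [if_neg h1']
  by_cases h2 : N ≤ (P N d s i).length ∧
      ∃ A : α, (P N d s i).getD ((P N d s i).length - N) none = some A ∧
        (P N d s i).count (some A) < d A
  · rw [if_pos h2]
    obtain ⟨hNi, A, hgd, hcnt⟩ := h2
    rw [len_P] at hNi
    have hsub : i - N < i := Nat.sub_lt (lt_of_lt_of_le hN hNi) hN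
    rw [len_P, getD_P N d s hsub] at hgd
    refine Or.inr (Or.inl ⟨h1, A, hNi, hgd, hcnt, ?_, rfl⟩)
    show (P N d s i).getD ((P N d s i).length - N) none = some A
    rw [len_P, getD_P N d s hsub]; exact hgd
  · rw [if_neg h2]
    cases hdw : (R N d s i).dropWhile (fun A => decide (d A ≤ (P N d s i).count (some A))) with
    | nil => exact Or.inr (Or.inr (Or.inl ⟨h1, hdw, rfl, rfl⟩))
    | cons A tl =>
        have hfalse := dropWhile_head_false hdw
        have hlt : cnt N d s i A < d A := by have h := hfalse; simp at h; exact h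
        exact Or.inr (Or.inr (Or.inr ⟨h1, A, tl, hdw, hlt, rfl, rfl⟩))

end Statement8Aux

namespace Statement8Aux
set_option linter.unusedSectionVars false
variable [Fintype α] [DecidableEq α] (N : ℕ) (d : α → ℕ) (s : List α) (hN : 0 < N)
include hN

lemma cnt_le_d (i : ℕ) (A : α) : cnt N d s i A ≤ d A := by
  induction i with
  | zero => simp [cnt, P]; exact Nat.zero_le _
  | succ i ih =>
      rw [cnt_succ]
      by_cases hb : corrBelt N d s i = some A
      · rcases step_cases N d s hN i with ⟨_, h, _⟩ | ⟨_, A', _, _, hlt, h, _⟩ |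
          ⟨_, _, h, _⟩ | ⟨_, A', tl, _, hlt, h, _⟩
        · rw [h] at hb; exact absurd hb (by simp)
        · rw [h] at hb; obtain rfl : A' = A := by simpa using hb
          simp [hb, h]; omega
        · rw [h] at hb; exact absurd hb (by simp)
        · rw [h] at hb; obtain rfl : A' = A := by simpa using hb
          simp [hb, h]; omega
      · simp [hb]; exact ih

lemma tot_le (i : ℕ) : tot N d s i ≤ T d := by
  rw [tot_eq_sum, T]
  exact Finset.sum_le_sum fun A _ => cnt_le_d N d s hN i A

lemma cnt_eq_of_total {n : ℕ} (h : tot N d s n = T d) (A : α) : cnt N d s n A = d A := by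
  by_contra hne
  have hlt : cnt N d s n A < d A := lt_of_le_of_ne (cnt_le_d N d s hN n A) hne
  have : tot N d s n < T d := by
    rw [tot_eq_sum, T]
    exact Finset.sum_lt_sum (fun B _ => cnt_le_d N d s hN n B) ⟨A, Finset.mem_univ A, hlt⟩
  omega

lemma exists_unmet {n : ℕ} (h : tot N d s n ≠ T d) : ∃ A, cnt N d s n A < d A := by
  by_contra hno
  push_neg at hno
  have h1 : ∀ A, cnt N d s n A = d A := fun A => le_antisymm (cnt_le_d N d s hN n A) (hno A)
  exact h (by rw [tot_eq_sum, T]; exact Finset.sum_congr rfl fun A _ => h1 A)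

omit hN in
lemma diff_le {A : α} {i m : ℕ} (h : i ≤ m) :
    cnt N d s m A + tot N d s i ≤ cnt N d s i A + tot N d s m := by
  induction m, h using Nat.le_induction with
  | base => exact le_refl _
  | succ m him ih =>
      rw [cnt_succ, tot_succ]
      cases hb : corrBelt N d s m with
      | none => simp [hb]; omega
      | some v => by_cases hv : v = A <;> simp [hb, hv] <;> omega

/-- the keep lemma: a mould stays on the belt while its demand is unmet -/
lemma keep_next {j : ℕ} {A : α} (hb : corrBelt N d s j = some A)
    (hlt : cnt N d s (j + N) A < d A) : corrBelt N d s (j + N) = some A := by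
  have hne : tot N d s (j + N) ≠ T d := by
    intro h; rw [cnt_eq_of_total N d s hN h A] at hlt; omega
  have := step_keep N d s hN hne (Nat.le_add_left N j)
    (by rw [Nat.add_sub_cancel]; exact hb) hlt
  exact this.1

/-- the liveness invariant -/
lemma live_invariant (hspos : ∀ A : α, 0 < s.count A) (i : ℕ) (A : α)
    (hlt : cnt N d s i A < d A) :
    (∃ j, j < i ∧ i ≤ j + N ∧ corrBelt N d s j = some A) ∨ 0 < (R N d s i).count A := by
  induction i with
  | zero => right; exact hspos A
  | succ i ih =>
      have hlt' : cnt N d s i A < d A := lt_of_le_of_lt (cnt_mono N d s (Nat.le_succ i) A) hlt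
      rcases ih hlt' with ⟨j, hj, hij, hbj⟩ | hrem
      · by_cases hij' : i + 1 ≤ j + N
        · exact Or.inl ⟨j, Nat.lt_succ_of_lt hj, hij', hbj⟩
        · have hieq : i = j + N := by omega
          subst hieq
          have hbi : corrBelt N d s (j + N) = some A := keep_next N d s hN hbj hlt'
          exact Or.inl ⟨j + N, Nat.lt_succ_self _, by omega, hbi⟩
      · have hne : tot N d s i ≠ T d := by
          intro h; rw [cnt_eq_of_total N d s hN h A] at hlt'; omega
        have hAfalse : (fun B => decide (d B ≤ cnt N d s i B)) A = false := by
          simpa using hlt'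
        rcases step_cases N d s hN i with ⟨h, _, _⟩ | ⟨_, A', _, _, _, _, hR⟩ |
          ⟨_, hdw, _, _⟩ | ⟨_, A', tl, hdw, _, hbi, hR⟩
        · exact absurd h hne
        · right; rw [hR]; exact hrem
        · exfalso
          have := count_dropWhile (p := fun B => decide (d B ≤ cnt N d s i B)) (x := A) hAfalse (R N d s i)
          rw [hdw] at this
          simp at this
          omega
        · by_cases hAA : A' = A
          · subst hAA
            exact Or.inl ⟨i, Nat.lt_succ_self _, by omega, hbi⟩
          · right
            rw [hR]
            have := count_dropWhile (p := fun B => decide (d B ≤ cnt N d s i B)) (x := A) hAfalse (R N d s i)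
            rw [hdw, List.count_cons] at this
            simp [hAA] at this
            omega

lemma progress (hspos : ∀ A : α, 0 < s.count A) {i : ℕ} (h : tot N d s i < T d) :
    tot N d s i + 1 ≤ tot N d s (i + N) := by
  obtain ⟨A, hlt⟩ := exists_unmet N d s hN (n := i) (by omega)
  have hne : tot N d s i ≠ T d := by omega
  rcases live_invariant N d s hN hspos i A hlt with ⟨j, hj, hij, hbj⟩ | hrem
  · by_cases hc : cnt N d s (j + N) A = d A
    · have h1 := diff_le N d s (A := A) hij
      have h2 := cnt_mono N d s hij A  -- unused maybe
      have h3 := tot_mono N d s (show j + N ≤ i + N by omega)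
      omega
    · have hlt2 : cnt N d s (j + N) A < d A :=
        lt_of_le_of_ne (cnt_le_d N d s hN (j+N) A) hc
      have hbjN := keep_next N d s hN hbj hlt2
      have h1 : tot N d s (j + N + 1) = tot N d s (j + N) + 1 := by
        rw [tot_succ, hbjN]; simp
      have h2 := tot_mono N d s (show i ≤ j + N by omega)
      have h3 := tot_mono N d s (show j + N + 1 ≤ i + N by omega)
      omega
  · have hsome : corrBelt N d s i ≠ none := by
      have hAfalse : (fun B => decide (d B ≤ cnt N d s i B)) A = false := by
        simpa using hlt
      rcases step_cases N d s hN i with ⟨h', _, _⟩ | ⟨_, _, _, _, _, hbi, _⟩ |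
        ⟨_, hdw, _, _⟩ | ⟨_, _, _, _, _, hbi, _⟩
      · exact absurd h' hne
      · rw [hbi]; simp
      · exfalso
        have := count_dropWhile (p := fun B => decide (d B ≤ cnt N d s i B)) (x := A) hAfalse (R N d s i)
        rw [hdw] at this
        simp at this
        omega
      · rw [hbi]; simp
    have h1 : tot N d s (i + 1) = tot N d s i + 1 := by
      rw [tot_succ]; simp [hsome]
    have h2 := tot_mono N d s (show i + 1 ≤ i + N by omega)
    omega

lemma reach (hspos : ∀ A : α, 0 < s.count A) (k : ℕ) :
    T d ≤ tot N d s (k * N) ∨ k ≤ tot N d s (k * N) := by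
  induction k with
  | zero => right; exact Nat.zero_le _
  | succ k ih =>
      by_cases hT : T d ≤ tot N d s (k * N)
      · left
        exact le_trans hT (tot_mono N d s (by nlinarith))
      · have hlt : tot N d s (k * N) < T d := by omega
        have hp := progress N d s hN hspos hlt
        have hk : k ≤ tot N d s (k * N) := ih.resolve_left hT
        right
        have he : (k+1) * N = k * N + N := by ring
        rw [he]
        omega

lemma total_reached (hspos : ∀ A : α, 0 < s.count A) {i : ℕ} (h : T d * N ≤ i) :
    tot N d s i = T d := by
  have h1 := (reach N d s hN hspos (T d)).elim id id
  have h2 := tot_le N d s hN (T d * N)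
  have h3 : tot N d s (T d * N) = T d := by omega
  have h4 := tot_mono N d s h
  have h5 := tot_le N d s hN i
  omega

lemma b_none_of_ge (hspos : ∀ A : α, 0 < s.count A) {i : ℕ} (h : T d * N ≤ i) :
    corrBelt N d s i = none :=
  (step_total N d s (total_reached N d s hN hspos h)).1

end Statement8Aux

namespace Statement8Aux
set_option linter.unusedSectionVars false
variable [Fintype α] [DecidableEq α] (N : ℕ) (d : α → ℕ) (s : List α) (hN : 0 < N)

instance instDecInjected (N : ℕ) (b : ℕ → Option α) (A : α) (i : ℕ) :
    Decidable (Injected N b A i) := by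
  unfold Injected; infer_instance

include hN in
lemma inj_invariant (i : ℕ) (A : α) :
    ((Finset.range i).filter (fun j => Injected N (corrBelt N d s) A j)).card
      + (R N d s i).count A ≤ s.count A := by
  induction i with
  | zero =>
      simp only [Finset.range_zero, Finset.filter_empty, Finset.card_empty, Nat.zero_add]
      exact le_refl _
  | succ i ih =>
      have hsplit : ((Finset.range (i+1)).filter
            (fun j => Injected N (corrBelt N d s) A j)).card
          = ((Finset.range i).filter (fun j => Injected N (corrBelt N d s) A j)).card
            + (if Injected N (corrBelt N d s) A i then 1 else 0) := by
        rw [Finset.range_add_one, Finset.filter_insert]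
        split_ifs with h
        · rw [Finset.card_insert_of_notMem (by simp)]
        · omega
      rw [hsplit]
      rcases step_cases N d s hN i with ⟨_, hbi, hR⟩ | ⟨_, A', hNi, hbN, _, hbi, hR⟩ |
        ⟨_, _, hbi, hR⟩ | ⟨_, A', tl, hdw, _, hbi, hR⟩
      · have hni : ¬ Injected N (corrBelt N d s) A i := by
          intro h; rw [h.1] at hbi; simp at hbi
        rw [hR]; simp [hni]; omega
      · have hni : ¬ Injected N (corrBelt N d s) A i := by
          rintro ⟨hA, hor⟩
          rw [hbi] at hA
          obtain rfl : A' = A := by simpa using hA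
          rcases hor with h | h
          · omega
          · exact h hbN
        rw [hR]; simp [hni]; omega
      · have hni : ¬ Injected N (corrBelt N d s) A i := by
          intro h; rw [h.1] at hbi; simp at hbi
        rw [hR]; simp [hni]; omega
      · have hsub : (A' :: tl).count A ≤ (R N d s i).count A := by
          rw [← hdw]
          exact (List.dropWhile_sublist _).count_le _
        rw [hR]
        by_cases hAA : A' = A
        · rw [hAA, List.count_cons_self] at hsub
          have : (if Injected N (corrBelt N d s) A i then 1 else 0) ≤ 1 := by
            split_ifs <;> omega
          omega
        · have hni : ¬ Injected N (corrBelt N d s) A i := by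
            intro h; rw [h.1] at hbi; simp at hbi; exact hAA hbi.symm
          rw [List.count_cons_of_ne hAA] at hsub
          simp [hni]
          omega

end Statement8Aux

/-- The belt function corresponding to any injection sequence (containing
each type `A` exactly `c A` times) is a belt assignment, i.e. it satisfies
conditions (i), (ii) and (iii). -/
theorem statement8 [Fintype α] [DecidableEq α] (N : ℕ) (hN : 0 < N)
    (d c : α → ℕ) (hd : ∀ A, 0 < d A) (hc : ∀ A, 0 < c A)
    (s : List α) (hs : ∀ A : α, s.count A = c A) :
    IsBeltAssignment N d c (corrBelt N d s) := by
  classical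
  open Statement8Aux in
  have hspos : ∀ A : α, 0 < s.count A := fun A => by rw [hs]; exact hc A
  set b := corrBelt N d s with hb
  set M := Statement8Aux.T d * N with hM
  have hnone : ∀ i, M ≤ i → b i = none := fun i hi =>
    Statement8Aux.b_none_of_ge N d s hN hspos hi
  have htot : Statement8Aux.tot N d s M = Statement8Aux.T d :=
    Statement8Aux.total_reached N d s hN hspos (le_refl M)
  refine ⟨?_, ?_, ?_, ?_⟩
  · -- finiteness
    intro A
    apply Set.Finite.subset (Set.finite_Iio M)
    intro i hi
    simp only [Set.mem_setOf_eq] at hi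
    simp only [Set.mem_Iio]
    by_contra hge
    rw [hnone i (by omega)] at hi
    cases hi
  · -- demands met
    intro A
    have hset : {i | b i = some A} = {j | b j = some A ∧ j < M} := by
      ext i
      simp only [Set.mem_setOf_eq]
      constructor
      · intro h
        refine ⟨h, ?_⟩
        by_contra hge
        rw [hnone i (by omega)] at h
        cases h
      · exact fun h => h.1
    rw [hset, Statement8Aux.ncard_eq_cnt]
    exact Statement8Aux.cnt_eq_of_total N d s hN htot A
  · -- persistence
    intro i A hbi
    by_cases hceq : Statement8Aux.cnt N d s (i + N) A = d A
    · right
      rw [Statement8Aux.ncard_eq_cnt]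
      exact hceq
    · left
      exact Statement8Aux.keep_next N d s hN hbi
        (lt_of_le_of_ne (Statement8Aux.cnt_le_d N d s hN (i + N) A) hceq)
  · -- mould capacity
    intro A
    have hset : {i | Injected N b A i}
        = ↑((Finset.range M).filter (fun j => Injected N b A j)) := by
      ext i
      simp only [Set.mem_setOf_eq, Finset.coe_filter, Finset.mem_range]
      constructor
      · intro h
        refine ⟨?_, h⟩
        by_contra hge
        have := h.1
        rw [hnone i (by omega)] at this
        cases this
      · exact fun h => h.2
    rw [MouldsUsed, hset, Set.ncard_coe_finset]
    have hinv := Statement8Aux.inj_invariant N d s hN M A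
    rw [hs, ← hb] at hinv
    omega
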